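/- Let s,p ∈ (0,1), n ∈ ℕ, 0<γ≤1/2, let u ∈ W^{s,p}(ℝ^n), and define g(x) = sup_{j∈ℕ} 2^{js}·(⨍_{B(x,2^{−j})} |u(z) − m_u^γ(B(x,2^{−j}))|^p dz)^{1/p}. Then there is a constant C (depending only on n, s, p, γ) such that for every x ∈ ℝ^n and all l,m ∈ ℕ with l>m, |m_u^γ(B(x,2^{−l})) − m_u^γ(B(x,2^{−m}))| ≤ C·Σ_{j=m}^{l−1} 2^{−j(s−n/p)}·(∫_{B(x,2^{−j})} g(z)^p dz)^{1/p}. -/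

import Mathlib

open MeasureTheory Metric Set Filter ENNReal

/-- The `γ`-median of `u` over `A` w.r.t. `μ`. -/
noncomputable def med {X : Type*} [MeasurableSpace X] (μ : Measure X) (γ : ℝ)
    (u : X → ℝ) (A : Set X) : ℝ :=
  sSup {M : ℝ | μ {x ∈ A | u x < M} ≤ ENNReal.ofReal γ * μ A}

/-- `(g k)_{k ∈ ℤ}` is a fractional `s`-gradient of `u` in `S`. -/
def IsFracGradient {X : Type*} [MetricSpace X] [MeasurableSpace X] (μ : Measure X)
    (s : ℝ) (u : X → ℝ) (S : Set X) (g : ℤ → X → ℝ) : Prop :=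
  (∀ k, Measurable (g k)) ∧ (∀ k x, 0 ≤ g k x) ∧
  ∃ E : Set X, E ⊆ S ∧ μ E = 0 ∧ ∀ k : ℤ, ∀ x ∈ S \ E, ∀ y ∈ S \ E,
    (2:ℝ) ^ (k - 1) ≤ dist x y → dist x y < (2:ℝ) ^ k →
    |u x - u y| ≤ dist x y ^ s * (g k x + g k y)

/-- The `ℓ^q` norm of a sequence indexed by `ℤ`. -/
noncomputable def lqNormE (q : ℝ≥0∞) (f : ℤ → ℝ) : ℝ≥0∞ :=
  if q = ∞ then ⨆ k, ENNReal.ofReal |f k|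
  else (∑' k, ENNReal.ofReal |f k| ^ q.toReal) ^ (1 / q.toReal)

/-- The `L^p(S, ℓ^q)` norm of a sequence of functions (w.r.t. the measure `μ`). -/
noncomputable def lpLqNorm {X : Type*} [MeasurableSpace X] (μ : Measure X)
    (p q : ℝ≥0∞) (g : ℤ → X → ℝ) : ℝ≥0∞ :=
  if p = ∞ then essSup (fun x => lqNormE q fun k => g k x) μ
  else (∫⁻ x, (lqNormE q fun k => g k x) ^ p.toReal ∂μ) ^ (1 / p.toReal)

/-- The Hajłasz–Triebel–Lizorkin (quasi)norm of `u` on `S`. -/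
noncomputable def tlNorm {X : Type*} [MetricSpace X] [MeasurableSpace X] (μ : Measure X)
    (s : ℝ) (p q : ℝ≥0∞) (S : Set X) (u : X → ℝ) : ℝ≥0∞ :=
  eLpNorm u p (μ.restrict S) +
    ⨅ (g : ℤ → X → ℝ) (_ : IsFracGradient μ s u S g), lpLqNorm (μ.restrict S) p q g

/-- Membership in the Hajłasz–Triebel–Lizorkin space `M^s_{p,q}(S)`. -/
def MemTL {X : Type*} [MetricSpace X] [MeasurableSpace X] (μ : Measure X)
    (s : ℝ) (p q : ℝ≥0∞) (S : Set X) (u : X → ℝ) : Prop :=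
  MemLp u p (μ.restrict S) ∧ tlNorm μ s p q S u < ∞

/-- The Triebel–Lizorkin capacity of `E ⊆ X`. -/
noncomputable def tlCapacity {X : Type*} [MetricSpace X] [MeasurableSpace X] (μ : Measure X)
    (s : ℝ) (p q : ℝ≥0∞) (E : Set X) : ℝ≥0∞ :=
  ⨅ (u : X → ℝ) (_ : MemTL μ s p q univ u)
    (_ : ∃ U : Set X, IsOpen U ∧ E ⊆ U ∧ ∀ x ∈ U, 1 ≤ u x),
    tlNorm μ s p q univ u ^ p.toReal

/-- `μ` is a doubling measure: balls have positive finite measure and a doubling constant exists. -/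
def IsDoubling {X : Type*} [MetricSpace X] [MeasurableSpace X] (μ : Measure X) : Prop :=
  (∀ (x : X) (r : ℝ), 0 < r → 0 < μ (ball x r) ∧ μ (ball x r) < ∞) ∧
  ∃ c : ℝ≥0∞, 1 ≤ c ∧ c < ∞ ∧ ∀ (x : X) (r : ℝ), 0 < r → μ (ball x (2*r)) ≤ c * μ (ball x r)

/-- Generalized Hausdorff measure with a gauge assigning weight `h x r` to the ball `B(x,r)`. -/
noncomputable def hMeasureBall {X : Type*} [MetricSpace X] (h : X → ℝ → ℝ≥0∞) (E : Set X) : ℝ≥0∞ :=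
  ⨆ (δ : ℝ) (_ : 0 < δ), ⨅ (c : ℕ → X) (r : ℕ → ℝ)
    (_ : E ⊆ ⋃ i, ball (c i) (r i)) (_ : ∀ i, 0 < r i ∧ r i ≤ δ),
    ∑' i, h (c i) (r i)

/-- Generalized Hausdorff measure with radius gauge `h`. -/
noncomputable def hMeasure {X : Type*} [MetricSpace X] (h : ℝ → ℝ≥0∞) (E : Set X) : ℝ≥0∞ :=
  hMeasureBall (fun _ r => h r) E

/-- Membership in the fractional Sobolev space `W^{s,p}(ℝ^n)`. -/
def MemWsp (n : ℕ) (s p : ℝ) (u : EuclideanSpace ℝ (Fin n) → ℝ) : Prop :=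
  MemLp u (ENNReal.ofReal p) volume ∧
  (∫⁻ x, ∫⁻ y, ENNReal.ofReal (|u x - u y| ^ p / dist x y ^ ((n : ℝ) + s * p))) < ∞

/-- The maximal-type function
`g(x) = sup_j 2^{js} (⨍_{B(x,2^{-j})} |u(z) - m_u^γ(B(x,2^{-j}))|^p dz)^{1/p}`. -/
noncomputable def gFun (n : ℕ) (s p γ : ℝ) (u : EuclideanSpace ℝ (Fin n) → ℝ)
    (x : EuclideanSpace ℝ (Fin n)) : ℝ≥0∞ :=
  ⨆ j : ℕ, ENNReal.ofReal ((2:ℝ) ^ ((j : ℝ) * s)) *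
    ((volume (ball x ((2:ℝ) ^ (-(j : ℝ)))))⁻¹ *
      ∫⁻ z in ball x ((2:ℝ) ^ (-(j : ℝ))),
        ENNReal.ofReal (|u z - med volume γ u (ball x ((2:ℝ) ^ (-(j : ℝ))))| ^ p)) ^ (1 / p)

-- ### Auxiliary lemmas ###

section MedLemmas

variable {X : Type*} [MeasurableSpace X] {μ : Measure X} {u : X → ℝ} {γ : ℝ} {A : Set X}

lemma med_sep_eq (A : Set X) (M : ℝ) : {x ∈ A | u x < M} = A ∩ u ⁻¹' Iio M := by
  ext y; simp [Set.mem_sep_iff, Set.mem_preimage, Set.mem_Iio]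

lemma med_props (hγ0 : 0 < γ) (hγ : γ ≤ 1/2) (hu : Measurable u)
    (hA : MeasurableSet A) (h0 : μ A ≠ 0) (ht : μ A ≠ ∞) :
    (∀ M, M < med μ γ u A → μ {x ∈ A | u x < M} ≤ ENNReal.ofReal γ * μ A) ∧
    (∀ M, med μ γ u A < M → ENNReal.ofReal γ * μ A < μ {x ∈ A | u x < M}) := by
  set S := {M : ℝ | μ {x ∈ A | u x < M} ≤ ENNReal.ofReal γ * μ A} with hS
  have hmeas : ∀ M : ℝ, MeasurableSet {x ∈ A | u x < M} := by
    intro M; rw [med_sep_eq]; exact hA.inter (hu measurableSet_Iio)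
  have hmono : ∀ {M M' : ℝ}, M ≤ M' → {x ∈ A | u x < M} ⊆ {x ∈ A | u x < M'} := by
    intro M M' h y hy; exact ⟨hy.1, lt_of_lt_of_le hy.2 h⟩
  have hpos : 0 < ENNReal.ofReal γ * μ A :=
    ENNReal.mul_pos (by simp [ENNReal.ofReal_pos, hγ0]) h0
  -- S is nonempty
  have hSne : S.Nonempty := by
    have h1 : Tendsto (fun k : ℕ => μ {x ∈ A | u x < -(k : ℝ)}) atTop (nhds (μ (⋂ k : ℕ, {x ∈ A | u x < -(k : ℝ)}))) := by
      apply tendsto_measure_iInter_atTop (fun k => (hmeas _).nullMeasurableSet)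
      · intro i j hij
        exact hmono (by exact_mod_cast neg_le_neg (Nat.cast_le.mpr hij))
      · exact ⟨0, ne_top_of_le_ne_top ht (measure_mono (fun y hy => hy.1))⟩
    have h2 : (⋂ k : ℕ, {x ∈ A | u x < -(k : ℝ)}) = ∅ := by
      ext y
      simp only [Set.mem_iInter, Set.mem_empty_iff_false, iff_false, not_forall]
      obtain ⟨k, hk⟩ := exists_nat_gt (-(u y))
      exact ⟨k, fun h => absurd h.2 (by push_neg; linarith)⟩
    rw [h2, measure_empty] at h1
    obtain ⟨k, hk⟩ := (h1.eventually_lt_const hpos).exists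
    exact ⟨-(k : ℝ), hk.le⟩
  -- S is bounded above
  have hSbdd : BddAbove S := by
    have h1 : Tendsto (fun k : ℕ => μ {x ∈ A | u x < (k : ℝ)}) atTop (nhds (μ (⋃ k : ℕ, {x ∈ A | u x < (k : ℝ)}))) := by
      apply tendsto_measure_iUnion_atTop
      intro i j hij; exact hmono (Nat.cast_le.mpr hij)
    have h2 : (⋃ k : ℕ, {x ∈ A | u x < (k : ℝ)}) = A := by
      ext y
      simp only [Set.mem_iUnion]
      constructor
      · rintro ⟨k, hk⟩; exact hk.1
      · intro hy
        obtain ⟨k, hk⟩ := exists_nat_gt (u y)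
        exact ⟨k, hy, hk⟩
    rw [h2] at h1
    have hlt : ENNReal.ofReal γ * μ A < μ A := by
      calc ENNReal.ofReal γ * μ A ≤ 2⁻¹ * μ A := by
            apply mul_le_mul_left
            calc ENNReal.ofReal γ ≤ ENNReal.ofReal (1/2) := ENNReal.ofReal_le_ofReal hγ
              _ = 2⁻¹ := by
                    rw [one_div, ENNReal.ofReal_inv_of_pos two_pos]
                    norm_num
        _ = μ A / 2 := by rw [ENNReal.div_eq_inv_mul]
        _ < μ A := ENNReal.half_lt_self h0 ht
    obtain ⟨k, hk⟩ := (h1.eventually_const_lt hlt).exists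
    refine ⟨(k : ℝ), fun M hM => ?_⟩
    by_contra hcon
    push_neg at hcon
    have : μ {x ∈ A | u x < (k : ℝ)} ≤ ENNReal.ofReal γ * μ A :=
      le_trans (measure_mono (hmono hcon.le)) hM
    exact absurd this (not_le.mpr hk)
  constructor
  · intro M hM
    obtain ⟨M', hM', hlt⟩ := exists_lt_of_lt_csSup hSne hM
    exact le_trans (measure_mono (hmono hlt.le)) hM'
  · intro M hM
    by_contra hcon
    push_neg at hcon
    exact absurd (le_csSup hSbdd hcon) (not_le.mpr hM)

end MedLemmas

section MedLemmas2

variable {X : Type*} [MeasurableSpace X] {μ : Measure X} {u : X → ℝ} {γ : ℝ} {A : Set X}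

lemma med_abs_rpow_le {p : ℝ} (hp0 : 0 < p) (hp1 : p ≤ 1)
    (hγ0 : 0 < γ) (hγ : γ ≤ 1/2) (hu : Measurable u)
    (hA : MeasurableSet A) (h0 : μ A ≠ 0) (ht : μ A ≠ ⊤) (c : ℝ) :
    ENNReal.ofReal γ * μ A * ENNReal.ofReal (|med μ γ u A - c| ^ p) ≤
      ENNReal.ofReal (2 ^ p) * ∫⁻ z in A, ENNReal.ofReal (|u z - c| ^ p) ∂μ := by
  obtain ⟨hlo, hhi⟩ := med_props hγ0 hγ hu hA h0 ht
  have hmeas : ∀ M : ℝ, MeasurableSet {x ∈ A | u x < M} := by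
    intro M
    have : {x ∈ A | u x < M} = A ∩ u ⁻¹' Iio M := by
      ext y; simp [Set.mem_sep_iff, Set.mem_preimage, Set.mem_Iio]
    rw [this]; exact hA.inter (hu measurableSet_Iio)
  set m := med μ γ u A with hm
  by_cases hd : m = c
  · simp [hd, sub_self, abs_zero, Real.zero_rpow hp0.ne']
  set d := |m - c| with hddef
  have hd0 : 0 < d := abs_pos.mpr (sub_ne_zero.mpr hd)
  have hdhalf : 0 < d / 2 := by linarith
  have hdp : ENNReal.ofReal (d ^ p) = ENNReal.ofReal (2 ^ p) * ENNReal.ofReal ((d/2) ^ p) := by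
    rw [← ENNReal.ofReal_mul (by positivity), ← Real.mul_rpow (by norm_num) (by positivity)]
    norm_num
    ring_nf
  -- generic lower bound for the integral
  have hIntLB : ∀ Sset : Set X, MeasurableSet Sset → Sset ⊆ A →
      (∀ y ∈ Sset, d/2 ≤ |u y - c|) →
      ENNReal.ofReal ((d/2) ^ p) * μ Sset ≤ ∫⁻ z in A, ENNReal.ofReal (|u z - c| ^ p) ∂μ := by
    intro Sset hSm hSsub hSlb
    calc ENNReal.ofReal ((d/2) ^ p) * μ Sset
        = ∫⁻ _ in Sset, ENNReal.ofReal ((d/2) ^ p) ∂μ := by rw [setLIntegral_const]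
      _ ≤ ∫⁻ z in Sset, ENNReal.ofReal (|u z - c| ^ p) ∂μ := by
          apply setLIntegral_mono' hSm
          intro y hy
          exact ENNReal.ofReal_le_ofReal
            (Real.rpow_le_rpow (by positivity) (hSlb y hy) hp0.le)
      _ ≤ ∫⁻ z in A, ENNReal.ofReal (|u z - c| ^ p) ∂μ :=
          lintegral_mono' (Measure.restrict_mono hSsub le_rfl) le_rfl
  rcases lt_or_gt_of_ne (fun h : m = c => hd h) with hmc | hmc
  · -- m < c : use the "low" set
    have hdeq : d = c - m := by rw [hddef, abs_of_neg (by linarith)]; ring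
    have hMm : m < c - d/2 := by rw [hdeq]; linarith
    have hbig := hhi (c - d/2) hMm
    have hlb : ∀ y ∈ {x ∈ A | u x < c - d/2}, d/2 ≤ |u y - c| := by
      intro y hy
      have : u y < c - d/2 := hy.2
      rw [abs_sub_comm, abs_of_pos (by linarith)]
      linarith
    calc ENNReal.ofReal γ * μ A * ENNReal.ofReal (d ^ p)
        = ENNReal.ofReal (2 ^ p) * (ENNReal.ofReal ((d/2) ^ p) * (ENNReal.ofReal γ * μ A)) := by
          rw [hdp]; ring
      _ ≤ ENNReal.ofReal (2 ^ p) * (ENNReal.ofReal ((d/2) ^ p) * μ {x ∈ A | u x < c - d/2}) := by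
          exact mul_le_mul_right (mul_le_mul_right hbig.le _) _
      _ ≤ ENNReal.ofReal (2 ^ p) * ∫⁻ z in A, ENNReal.ofReal (|u z - c| ^ p) ∂μ := by
          gcongr
          exact hIntLB _ (hmeas _) (fun y hy => hy.1) hlb
  · -- c < m : use the "high" set
    have hdeq : d = m - c := by rw [hddef, abs_of_pos (by linarith)]
    have hMm : c + d/2 < m := by rw [hdeq] at hdhalf ⊢; linarith
    have hsmall := hlo (c + d/2) hMm
    set B := {x ∈ A | u x < c + d/2} with hB
    have hBsub : B ⊆ A := fun y hy => hy.1
    have hvol : μ (A \ B) = μ A - μ B :=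
      measure_diff hBsub (hmeas _).nullMeasurableSet (ne_top_of_le_ne_top ht (measure_mono hBsub))
    have hγhalf : ENNReal.ofReal γ ≤ 2⁻¹ := by
      calc ENNReal.ofReal γ ≤ ENNReal.ofReal (1/2) := ENNReal.ofReal_le_ofReal hγ
        _ = 2⁻¹ := by rw [one_div, ENNReal.ofReal_inv_of_pos two_pos]; norm_num
    have hvol2 : ENNReal.ofReal γ * μ A ≤ μ (A \ B) := by
      rw [hvol]
      calc ENNReal.ofReal γ * μ A ≤ 2⁻¹ * μ A := mul_le_mul_left hγhalf _
        _ = μ A - μ A / 2 := by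
            rw [ENNReal.sub_half ht, ENNReal.div_eq_inv_mul]
        _ ≤ μ A - ENNReal.ofReal γ * μ A := by
            apply tsub_le_tsub_left
            calc ENNReal.ofReal γ * μ A ≤ 2⁻¹ * μ A := mul_le_mul_left hγhalf _
              _ = μ A / 2 := by rw [ENNReal.div_eq_inv_mul]
        _ ≤ μ A - μ B := tsub_le_tsub_left hsmall _
    have hlb : ∀ y ∈ A \ B, d/2 ≤ |u y - c| := by
      intro y hy
      have h1 : ¬(u y < c + d/2) := fun h => hy.2 ⟨hy.1, h⟩
      push_neg at h1
      rw [abs_of_nonneg (by linarith)]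
      linarith
    calc ENNReal.ofReal γ * μ A * ENNReal.ofReal (d ^ p)
        = ENNReal.ofReal (2 ^ p) * (ENNReal.ofReal ((d/2) ^ p) * (ENNReal.ofReal γ * μ A)) := by
          rw [hdp]; ring
      _ ≤ ENNReal.ofReal (2 ^ p) * (ENNReal.ofReal ((d/2) ^ p) * μ (A \ B)) := by
          gcongr
      _ ≤ ENNReal.ofReal (2 ^ p) * ∫⁻ z in A, ENNReal.ofReal (|u z - c| ^ p) ∂μ := by
          gcongr
          exact hIntLB _ (hA.diff (hmeas _)) Set.diff_subset hlb


end MedLemmas2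

lemma abs_rpow_tri {p : ℝ} (hp0 : 0 < p) (hp1 : p ≤ 1) (a b c : ℝ) :
    ENNReal.ofReal (|a - c| ^ p) ≤ ENNReal.ofReal (|a - b| ^ p) + ENNReal.ofReal (|b - c| ^ p) := by
  calc ENNReal.ofReal (|a - c| ^ p) ≤ ENNReal.ofReal ((|a - b| + |b - c|) ^ p) :=
        ENNReal.ofReal_le_ofReal (Real.rpow_le_rpow (abs_nonneg _) (abs_sub_le a b c) hp0.le)
    _ = (ENNReal.ofReal (|a - b|) + ENNReal.ofReal (|b - c|)) ^ p := by
        rw [← ENNReal.ofReal_add (abs_nonneg _) (abs_nonneg _),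
          ENNReal.ofReal_rpow_of_nonneg (by positivity) hp0.le]
    _ ≤ ENNReal.ofReal |a - b| ^ p + ENNReal.ofReal |b - c| ^ p :=
        ENNReal.rpow_add_le_add_rpow _ _ hp0.le hp1
    _ = ENNReal.ofReal (|a - b| ^ p) + ENNReal.ofReal (|b - c| ^ p) := by
        rw [ENNReal.ofReal_rpow_of_nonneg (abs_nonneg _) hp0.le,
          ENNReal.ofReal_rpow_of_nonneg (abs_nonneg _) hp0.le]

lemma tel_rpow {p : ℝ} (hp0 : 0 < p) (hp1 : p ≤ 1) (F : ℕ → ℝ) (T : ℕ) :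
    ENNReal.ofReal (|F 0 - F T| ^ p) ≤
      ∑ t ∈ Finset.range T, ENNReal.ofReal (|F t - F (t + 1)| ^ p) := by
  induction T with
  | zero => simp [Real.zero_rpow hp0.ne']
  | succ T ih =>
      rw [Finset.sum_range_succ]
      exact le_trans (abs_rpow_tri hp0 hp1 (F 0) (F T) (F (T+1))) (add_le_add_left ih _)

lemma ennreal_div_helper {a b X Y : ℝ≥0∞} (ha0 : a ≠ 0) (hat : a ≠ ⊤) (hb0 : b ≠ 0)
    (hbt : b ≠ ⊤) (h : a * b * X ≤ Y) : X ≤ a⁻¹ * (b⁻¹ * Y) := by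
  have e : a⁻¹ * (b⁻¹ * (a * b * X)) = (a⁻¹ * a) * ((b⁻¹ * b) * X) := by ring
  rw [ENNReal.inv_mul_cancel ha0 hat, ENNReal.inv_mul_cancel hb0 hbt, one_mul, one_mul] at e
  calc X = a⁻¹ * (b⁻¹ * (a * b * X)) := e.symm
    _ ≤ a⁻¹ * (b⁻¹ * Y) := mul_le_mul_right (mul_le_mul_right h _) _

lemma lintegral_biUnion_finset_le {α ι : Type*} [MeasurableSpace α] (μ : Measure α)
    (f : α → ℝ≥0∞) (T : Finset ι) (S : ι → Set α) :
    ∫⁻ z in ⋃ y ∈ T, S y, f z ∂μ ≤ ∑ y ∈ T, ∫⁻ z in S y, f z ∂μ := by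
  classical
  induction T using Finset.induction with
  | empty => simp
  | @insert a s hnot ih =>
      rw [Finset.set_biUnion_insert, Finset.sum_insert hnot]
      calc ∫⁻ z in S a ∪ ⋃ y ∈ s, S y, f z ∂μ
          ≤ ∫⁻ z, f z ∂(μ.restrict (S a) + μ.restrict (⋃ y ∈ s, S y)) :=
            lintegral_mono' (Measure.restrict_union_le _ _) le_rfl
        _ = (∫⁻ z in S a, f z ∂μ) + ∫⁻ z in ⋃ y ∈ s, S y, f z ∂μ := lintegral_add_measure _ _ _
        _ ≤ (∫⁻ z in S a, f z ∂μ) + ∑ y ∈ s, ∫⁻ z in S y, f z ∂μ := add_le_add_right ih _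

lemma cover_unit_ball (n : ℕ) :
    ∃ T : Finset (EuclideanSpace ℝ (Fin n)), (∀ y ∈ T, ‖y‖ < 3/2) ∧
      closedBall (0 : EuclideanSpace ℝ (Fin n)) 1 ⊆ ⋃ y ∈ T, ball y 4⁻¹ := by
  classical
  obtain ⟨t, ht⟩ := (isCompact_closedBall (0 : EuclideanSpace ℝ (Fin n)) 1).elim_finite_subcover
    (fun y : EuclideanSpace ℝ (Fin n) => ball y 4⁻¹) (fun _ => isOpen_ball)
    (fun a _ => Set.mem_iUnion.2 ⟨a, mem_ball_self (by norm_num)⟩)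
  refine ⟨t.filter (fun y => ‖y‖ < 3/2), fun y hy => (Finset.mem_filter.mp hy).2, ?_⟩
  intro a ha
  obtain ⟨y, hyt, hay⟩ := Set.mem_iUnion₂.mp (ht ha)
  have hny : ‖y‖ < 3/2 := by
    have h1 : dist a y < 4⁻¹ := mem_ball.mp hay
    have h2 : ‖a‖ ≤ 1 := mem_closedBall_zero_iff.mp ha
    calc ‖y‖ ≤ ‖a‖ + dist a y := by
          rw [dist_eq_norm]
          calc ‖y‖ = ‖a - (a - y)‖ := by rw [show a - (a - y) = y from by abel]
            _ ≤ ‖a‖ + ‖a - y‖ := norm_sub_le _ _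
      _ < 3/2 := by linarith
  exact Set.mem_iUnion₂.mpr ⟨y, Finset.mem_filter.mpr ⟨hyt, hny⟩, hay⟩

section Mid

variable {n : ℕ} {s p γ : ℝ} {u : EuclideanSpace ℝ (Fin n) → ℝ}

noncomputable def Phi (p : ℝ) (u : EuclideanSpace ℝ (Fin n) → ℝ)
    (w : EuclideanSpace ℝ (Fin n)) (ρ c : ℝ) : ℝ≥0∞ :=
  ∫⁻ z in ball w ρ, ENNReal.ofReal (|u z - c| ^ p)

noncomputable def Jfun (p γ r : ℝ) (u : EuclideanSpace ℝ (Fin n) → ℝ)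
    (z : EuclideanSpace ℝ (Fin n)) : ℝ≥0∞ :=
  (volume (ball z r))⁻¹ * Phi p u z r (med volume γ u (ball z r))

lemma Phi_mono {w z : EuclideanSpace ℝ (Fin n)} {ρ ρ' : ℝ} (hsub : ball w ρ ⊆ ball z ρ')
    (c : ℝ) : Phi p u w ρ c ≤ Phi p u z ρ' c :=
  lintegral_mono' (Measure.restrict_mono hsub le_rfl) le_rfl

lemma Phi_shift (hp0 : 0 < p) (hp1 : p ≤ 1) (w : EuclideanSpace ℝ (Fin n)) (ρ b c : ℝ) :
    Phi p u w ρ c ≤ Phi p u w ρ b + volume (ball w ρ) * ENNReal.ofReal (|b - c| ^ p) := by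
  calc Phi p u w ρ c
      ≤ ∫⁻ z in ball w ρ, (ENNReal.ofReal (|u z - b| ^ p) + ENNReal.ofReal (|b - c| ^ p)) :=
        lintegral_mono fun z => abs_rpow_tri hp0 hp1 _ _ _
    _ = Phi p u w ρ b + volume (ball w ρ) * ENNReal.ofReal (|b - c| ^ p) := by
        rw [lintegral_add_right' _ aemeasurable_const, setLIntegral_const, mul_comm]
        rfl

lemma med_dist_int (hp0 : 0 < p) (hp1 : p ≤ 1) (hγ0 : 0 < γ) (hγ : γ ≤ 1/2)
    (humeas : Measurable u) (w : EuclideanSpace ℝ (Fin n)) {ρ : ℝ} (hρ : 0 < ρ) (c : ℝ) :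
    ENNReal.ofReal (|med volume γ u (ball w ρ) - c| ^ p) ≤
      2 * (ENNReal.ofReal γ)⁻¹ * ((volume (ball w ρ))⁻¹ * Phi p u w ρ c) := by
  have hγne : ENNReal.ofReal γ ≠ 0 := by
    simp only [ne_eq, ENNReal.ofReal_eq_zero, not_le]; linarith
  have h := med_abs_rpow_le hp0 hp1 hγ0 hγ humeas measurableSet_ball
    (measure_ball_pos volume w hρ).ne' measure_ball_lt_top.ne c
  have h2p : ENNReal.ofReal (2 ^ p) ≤ 2 := by
    calc ENNReal.ofReal (2 ^ p) ≤ ENNReal.ofReal (2 ^ (1:ℝ)) :=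
          ENNReal.ofReal_le_ofReal (Real.rpow_le_rpow_of_exponent_le one_le_two hp1)
      _ = 2 := by rw [Real.rpow_one]; norm_num
  have h3 : ENNReal.ofReal γ * volume (ball w ρ) *
      ENNReal.ofReal (|med volume γ u (ball w ρ) - c| ^ p) ≤ 2 * Phi p u w ρ c :=
    le_trans h (mul_le_mul_left h2p _)
  have h4 := ennreal_div_helper hγne ENNReal.ofReal_ne_top
    (measure_ball_pos volume w hρ).ne' measure_ball_lt_top.ne h3
  calc ENNReal.ofReal (|med volume γ u (ball w ρ) - c| ^ p)
      ≤ (ENNReal.ofReal γ)⁻¹ * ((volume (ball w ρ))⁻¹ * (2 * Phi p u w ρ c)) := h4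
    _ = 2 * (ENNReal.ofReal γ)⁻¹ * ((volume (ball w ρ))⁻¹ * Phi p u w ρ c) := by ring

lemma Jfun_le (s : ℝ) (hp0 : 0 < p) (z : EuclideanSpace ℝ (Fin n)) (j : ℕ) :
    Jfun p γ ((2:ℝ) ^ (-(j:ℝ))) u z ≤
      (ENNReal.ofReal ((2:ℝ) ^ ((j:ℝ) * s)) ^ p)⁻¹ * gFun n s p γ u z ^ p := by
  have hAj_eq : ENNReal.ofReal ((2:ℝ) ^ ((j:ℝ) * s)) ^ p
      = ENNReal.ofReal (((2:ℝ) ^ ((j:ℝ) * s)) ^ p) :=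
    ENNReal.ofReal_rpow_of_pos (Real.rpow_pos_of_pos two_pos _)
  have hAj0 : ENNReal.ofReal ((2:ℝ) ^ ((j:ℝ) * s)) ^ p ≠ 0 := by
    rw [hAj_eq]
    simp only [ne_eq, ENNReal.ofReal_eq_zero, not_le]
    positivity
  have hAjt : ENNReal.ofReal ((2:ℝ) ^ ((j:ℝ) * s)) ^ p ≠ ⊤ := by
    rw [hAj_eq]; exact ENNReal.ofReal_ne_top
  have h1 : (fun j' : ℕ => ENNReal.ofReal ((2:ℝ) ^ ((j':ℝ) * s)) *
      ((volume (ball z ((2:ℝ) ^ (-(j':ℝ)))))⁻¹ *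
        ∫⁻ w in ball z ((2:ℝ) ^ (-(j':ℝ))),
          ENNReal.ofReal (|u w - med volume γ u (ball z ((2:ℝ) ^ (-(j':ℝ))))| ^ p)) ^ (1/p)) j ≤
      gFun n s p γ u z := by
    unfold gFun
    exact le_iSup (fun j' : ℕ => ENNReal.ofReal ((2:ℝ) ^ ((j':ℝ) * s)) *
      ((volume (ball z ((2:ℝ) ^ (-(j':ℝ)))))⁻¹ *
        ∫⁻ w in ball z ((2:ℝ) ^ (-(j':ℝ))),
          ENNReal.ofReal (|u w - med volume γ u (ball z ((2:ℝ) ^ (-(j':ℝ))))| ^ p)) ^ (1/p)) j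
  simp only at h1
  have h2 := ENNReal.rpow_le_rpow h1 hp0.le
  rw [ENNReal.mul_rpow_of_nonneg _ _ hp0.le, ← ENNReal.rpow_mul, one_div,
    inv_mul_cancel₀ hp0.ne', ENNReal.rpow_one] at h2
  have h3 : Jfun p γ ((2:ℝ) ^ (-(j:ℝ))) u z
      = ((volume (ball z ((2:ℝ) ^ (-(j:ℝ)))))⁻¹ *
        ∫⁻ w in ball z ((2:ℝ) ^ (-(j:ℝ))),
          ENNReal.ofReal (|u w - med volume γ u (ball z ((2:ℝ) ^ (-(j:ℝ))))| ^ p)) := rfl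
  rw [h3]
  calc ((volume (ball z ((2:ℝ) ^ (-(j:ℝ)))))⁻¹ *
        ∫⁻ w in ball z ((2:ℝ) ^ (-(j:ℝ))),
          ENNReal.ofReal (|u w - med volume γ u (ball z ((2:ℝ) ^ (-(j:ℝ))))| ^ p))
      = (ENNReal.ofReal ((2:ℝ) ^ ((j:ℝ) * s)) ^ p)⁻¹ *
        (ENNReal.ofReal ((2:ℝ) ^ ((j:ℝ) * s)) ^ p * _) := by
        rw [← mul_assoc, ENNReal.inv_mul_cancel hAj0 hAjt, one_mul]
    _ ≤ (ENNReal.ofReal ((2:ℝ) ^ ((j:ℝ) * s)) ^ p)⁻¹ * gFun n s p γ u z ^ p :=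
        mul_le_mul_right h2 _


lemma vol_ball_congr {n : ℕ} [Nontrivial (EuclideanSpace ℝ (Fin n))]
    (w w' : EuclideanSpace ℝ (Fin n)) (ρ : ℝ) :
    volume (ball w ρ) = volume (ball w' ρ) := by
  rcases le_or_gt ρ 0 with h | h
  · rw [ball_eq_empty.mpr h, ball_eq_empty.mpr h]
  · rw [Measure.addHaar_ball volume w h.le, Measure.addHaar_ball volume w' h.le]

lemma master {n : ℕ} [Nontrivial (EuclideanSpace ℝ (Fin n))] (s : ℝ) {p γ : ℝ} (hp0 : 0 < p)
    {u : EuclideanSpace ℝ (Fin n) → ℝ} {x q : EuclideanSpace ℝ (Fin n)} {j : ℕ}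
    {Q C₀ K : ℝ≥0∞} (hC₀ : C₀ ≠ ⊤) {r : ℝ} (hrj : r = (2:ℝ) ^ (-(j:ℝ)))
    (hsub : ball q (r / 16) ⊆ ball x r)
    (hz : ∀ z ∈ ball q (r / 16), Q ≤ C₀ * Jfun p γ r u z + K) :
    Q ≤ C₀ * ((ENNReal.ofReal ((2:ℝ) ^ ((j:ℝ) * s)) ^ p)⁻¹ *
        ((volume (ball x (r / 16)))⁻¹ *
          ∫⁻ z in ball x r, gFun n s p γ u z ^ p)) + K := by
  subst hrj
  have hr : (0:ℝ) < (2:ℝ) ^ (-(j:ℝ)) := Real.rpow_pos_of_pos two_pos _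
  have hAj_eq : ENNReal.ofReal ((2:ℝ) ^ ((j:ℝ) * s)) ^ p
      = ENNReal.ofReal (((2:ℝ) ^ ((j:ℝ) * s)) ^ p) :=
    ENNReal.ofReal_rpow_of_pos (Real.rpow_pos_of_pos two_pos _)
  have hAjt : (ENNReal.ofReal ((2:ℝ) ^ ((j:ℝ) * s)) ^ p)⁻¹ ≠ ⊤ := by
    rw [ENNReal.inv_ne_top, hAj_eq]
    simp only [ne_eq, ENNReal.ofReal_eq_zero, not_le]
    positivity
  set r : ℝ := (2:ℝ) ^ (-(j:ℝ)) with hrdef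
  set Aj := ENNReal.ofReal ((2:ℝ) ^ ((j:ℝ) * s)) ^ p with hAj
  set V := volume (ball x (r/16)) with hV
  have hV0 : V ≠ 0 := (measure_ball_pos volume _ (by positivity)).ne'
  have hVt : V ≠ ⊤ := measure_ball_lt_top.ne
  have hVq : volume (ball q (r/16)) = V := vol_ball_congr q x _
  set G := ∫⁻ z in ball x r, gFun n s p γ u z ^ p with hG
  have h1 : Q * V ≤ C₀ * Aj⁻¹ * G + K * V := by
    calc Q * V = ∫⁻ _ in ball q (r/16), Q := by rw [setLIntegral_const, hVq]
      _ ≤ ∫⁻ z in ball q (r/16), (C₀ * Aj⁻¹ * gFun n s p γ u z ^ p + K) := by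
          apply setLIntegral_mono' measurableSet_ball
          intro z hzz
          refine le_trans (hz z hzz) (add_le_add_left ?_ K)
          calc C₀ * Jfun p γ r u z ≤ C₀ * (Aj⁻¹ * gFun n s p γ u z ^ p) :=
                mul_le_mul_right (Jfun_le s hp0 z j) C₀
            _ = C₀ * Aj⁻¹ * gFun n s p γ u z ^ p := by rw [mul_assoc]
      _ = C₀ * Aj⁻¹ * (∫⁻ z in ball q (r/16), gFun n s p γ u z ^ p) + K * V := by
          rw [lintegral_add_right' _ aemeasurable_const,
            lintegral_const_mul' _ _ (ENNReal.mul_ne_top hC₀ hAjt), setLIntegral_const, hVq]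
      _ ≤ C₀ * Aj⁻¹ * G + K * V := by
          gcongr
          exact lintegral_mono' (Measure.restrict_mono hsub le_rfl) le_rfl
  have hcan : ∀ B : ℝ≥0∞, B * V * V⁻¹ = B := fun B => by
    rw [mul_assoc, ENNReal.mul_inv_cancel hV0 hVt, mul_one]
  calc Q = Q * V * V⁻¹ := (hcan Q).symm
    _ ≤ (C₀ * Aj⁻¹ * G + K * V) * V⁻¹ := mul_le_mul_left h1 _
    _ = C₀ * Aj⁻¹ * G * V⁻¹ + K := by rw [add_mul, hcan K]
    _ = C₀ * (Aj⁻¹ * (V⁻¹ * G)) + K := by ring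


lemma dist_seg {n : ℕ} (x ζ : EuclideanSpace ℝ (Fin n)) (a b : ℝ) :
    dist (x + a • (ζ - x)) (x + b • (ζ - x)) = |a - b| * dist ζ x := by
  rw [dist_eq_norm]
  have h : (x + a • (ζ - x)) - (x + b • (ζ - x)) = (a - b) • (ζ - x) := by
    rw [sub_smul]; abel
  rw [h, norm_smul, Real.norm_eq_abs, dist_eq_norm]

lemma dist_seg_base {n : ℕ} (x ζ : EuclideanSpace ℝ (Fin n)) (a : ℝ) :
    dist (x + a • (ζ - x)) x = |a| * dist ζ x := by
  have := dist_seg x ζ a 0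
  simpa using this

end Mid

noncomputable def stepK (n : ℕ) (γ : ℝ) (N : ℕ) : ℝ≥0∞ :=
  2 * (ENNReal.ofReal γ)⁻¹ * (N : ℝ≥0∞) *
    ((1 + 2 * (ENNReal.ofReal γ)⁻¹ * ENNReal.ofReal ((16:ℝ)^n)) +
      (2 * (ENNReal.ofReal γ)⁻¹ * ENNReal.ofReal ((16:ℝ)^n) *
        (1 + 2 * (ENNReal.ofReal γ)⁻¹ * ENNReal.ofReal ((16:ℝ)^n)) +
        32 * (ENNReal.ofReal γ)⁻¹ * ENNReal.ofReal ((16:ℝ)^n))) *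
    ENNReal.ofReal ((16:ℝ)^n) * (volume (ball (0 : EuclideanSpace ℝ (Fin n)) 1))⁻¹

set_option maxHeartbeats 2000000 in
lemma step_estimate {n : ℕ} [Nontrivial (EuclideanSpace ℝ (Fin n))] {s p γ : ℝ}
    (hp0 : 0 < p) (hp1 : p ≤ 1) (hγ0 : 0 < γ) (hγ : γ ≤ 1/2)
    {u : EuclideanSpace ℝ (Fin n) → ℝ} (humeas : Measurable u)
    (T : Finset (EuclideanSpace ℝ (Fin n))) (hT : ∀ y ∈ T, ‖y‖ < 3/2)
    (hTcov : closedBall (0:EuclideanSpace ℝ (Fin n)) 1 ⊆ ⋃ y ∈ T, ball y 4⁻¹)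
    (x : EuclideanSpace ℝ (Fin n)) (j : ℕ) :
    ENNReal.ofReal (|med volume γ u (ball x ((2:ℝ) ^ (-(j:ℝ)) / 2)) -
        med volume γ u (ball x ((2:ℝ) ^ (-(j:ℝ))))| ^ p) ≤
      stepK n γ T.card * ENNReal.ofReal ((2:ℝ) ^ ((j:ℝ) * ((n:ℝ) - s * p))) *
        ∫⁻ z in ball x ((2:ℝ) ^ (-(j:ℝ))), gFun n s p γ u z ^ p := by
  have hr : (0:ℝ) < (2:ℝ) ^ (-(j:ℝ)) := Real.rpow_pos_of_pos two_pos _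
  set r : ℝ := (2:ℝ) ^ (-(j:ℝ)) with hrdef
  set v := volume (ball (0 : EuclideanSpace ℝ (Fin n)) 1) with hv
  have hv0 : v ≠ 0 := (measure_ball_pos volume _ one_pos).ne'
  have hvt : v ≠ ⊤ := measure_ball_lt_top.ne
  set g₁ := (ENNReal.ofReal γ)⁻¹ with hg1
  have hγne : ENNReal.ofReal γ ≠ 0 := by
    simp only [ne_eq, ENNReal.ofReal_eq_zero, not_le]; linarith
  have hg1t : g₁ ≠ ⊤ := ENNReal.inv_ne_top.mpr hγne
  set θ := ENNReal.ofReal ((16:ℝ)^n) with hθ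
  have hθt : θ ≠ ⊤ := ENNReal.ofReal_ne_top
  set W := volume (ball x r) with hW
  have hW0 : W ≠ 0 := (measure_ball_pos volume _ hr).ne'
  have hWt : W ≠ ⊤ := measure_ball_lt_top.ne
  set V := volume (ball x (r/16)) with hV
  have hV0 : V ≠ 0 := (measure_ball_pos volume _ (by positivity)).ne'
  have hVt : V ≠ ⊤ := measure_ball_lt_top.ne
  have hWz : ∀ z : EuclideanSpace ℝ (Fin n), volume (ball z r) = W :=
    fun z => vol_ball_congr z x r
  have hθeq : V⁻¹ * W = θ := by
    rw [hV, hW, Measure.addHaar_ball volume x (by positivity : (0:ℝ) ≤ r/16),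
      Measure.addHaar_ball volume x hr.le, finrank_euclideanSpace_fin, ← hv]
    have hne : ENNReal.ofReal ((r/16)^n) ≠ 0 := by
      simp only [ne_eq, ENNReal.ofReal_eq_zero, not_le]; positivity
    rw [ENNReal.mul_inv (Or.inl hne) (Or.inl ENNReal.ofReal_ne_top),
      ← ENNReal.ofReal_inv_of_pos (by positivity : (0:ℝ) < (r/16)^n)]
    calc ENNReal.ofReal (((r/16)^n)⁻¹) * v⁻¹ * (ENNReal.ofReal (r^n) * v)
        = (ENNReal.ofReal (((r/16)^n)⁻¹) * ENNReal.ofReal (r^n)) * (v⁻¹ * v) := by ring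
      _ = θ := by
          rw [ENNReal.inv_mul_cancel hv0 hvt, mul_one,
            ← ENNReal.ofReal_mul (by positivity), hθ]
          congr 1
          rw [div_pow, inv_div, div_mul_cancel₀ _ (pow_pos hr n).ne']
  have hVinv : ∀ (w : EuclideanSpace ℝ (Fin n)) (ρ : ℝ), r/16 ≤ ρ →
      (volume (ball w ρ))⁻¹ ≤ V⁻¹ := by
    intro w ρ hρ
    have h1 : V = volume (ball w (r/16)) := vol_ball_congr x w (r/16)
    rw [h1]
    exact ENNReal.inv_le_inv' (measure_mono (ball_subset_ball hρ))
  set G := ∫⁻ z in ball x r, gFun n s p γ u z ^ p with hG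
  set Gb := (ENNReal.ofReal ((2:ℝ) ^ ((j:ℝ) * s)) ^ p)⁻¹ * (V⁻¹ * G) with hGb
  set c₀ : ℝ := med volume γ u (ball x (r/2)) with hc₀
  -- reusable: J z in terms of Φ
  have hΦJ : ∀ z : EuclideanSpace ℝ (Fin n),
      Phi p u z r (med volume γ u (ball z r)) = W * Jfun p γ r u z := by
    intro z
    rw [Jfun, hWz z, ← mul_assoc, ENNReal.mul_inv_cancel hW0 hWt, one_mul]
  -- key comparison: quarter/half balls against z-full balls
  have hKey : ∀ (w z : EuclideanSpace ℝ (Fin n)) (ρ : ℝ), r/16 ≤ ρ →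
      ball w ρ ⊆ ball z r →
      ENNReal.ofReal (|med volume γ u (ball w ρ) - med volume γ u (ball z r)| ^ p) ≤
        2 * g₁ * θ * Jfun p γ r u z := by
    intro w z ρ hρ hsub
    have hρ0 : (0:ℝ) < ρ := lt_of_lt_of_le (by positivity) hρ
    calc ENNReal.ofReal (|med volume γ u (ball w ρ) - med volume γ u (ball z r)| ^ p)
        ≤ 2 * (ENNReal.ofReal γ)⁻¹ *
          ((volume (ball w ρ))⁻¹ * Phi p u w ρ (med volume γ u (ball z r))) :=
          med_dist_int hp0 hp1 hγ0 hγ humeas w hρ0 _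
      _ ≤ 2 * g₁ * (V⁻¹ * Phi p u z r (med volume γ u (ball z r))) := by
          rw [← hg1]
          exact mul_le_mul_right (mul_le_mul' (hVinv w ρ hρ) (Phi_mono hsub _)) _
      _ = 2 * g₁ * ((V⁻¹ * W) * Jfun p γ r u z) := by rw [hΦJ z]; ring
      _ = 2 * g₁ * θ * Jfun p γ r u z := by rw [hθeq]; ring
  -- half-ball Phi estimate
  have hC0t : W * (1 + 2 * g₁ * θ) ≠ ⊤ := by
    refine ENNReal.mul_ne_top hWt (ENNReal.add_ne_top.mpr ⟨ENNReal.one_ne_top, ?_⟩)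
    exact ENNReal.mul_ne_top (ENNReal.mul_ne_top (by norm_num) hg1t) hθt
  have hHalfz : ∀ z ∈ ball x (r/16), Phi p u x (r/2) c₀ ≤
      (W * (1 + 2 * g₁ * θ)) * Jfun p γ r u z + 0 := by
    intro z hz
    have hzx : dist x z < r/16 := by rw [dist_comm]; exact mem_ball.mp hz
    have hsub1 : ball x (r/2) ⊆ ball z r := ball_subset_ball' (by linarith)
    calc Phi p u x (r/2) c₀
        ≤ Phi p u x (r/2) (med volume γ u (ball z r)) +
            volume (ball x (r/2)) * ENNReal.ofReal (|med volume γ u (ball z r) - c₀| ^ p) :=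
          Phi_shift hp0 hp1 x (r/2) _ c₀
      _ ≤ Phi p u z r (med volume γ u (ball z r)) + W * (2 * g₁ * θ * Jfun p γ r u z) := by
          refine add_le_add (Phi_mono hsub1 _) (mul_le_mul' ?_ ?_)
          · rw [hW]; exact measure_mono (ball_subset_ball (by linarith))
          · rw [abs_sub_comm, hc₀]
            exact hKey x z (r/2) (by linarith) hsub1
      _ = (W * (1 + 2 * g₁ * θ)) * Jfun p γ r u z + 0 := by rw [hΦJ z]; ring
  have hHalf : Phi p u x (r/2) c₀ ≤ (W * (1 + 2 * g₁ * θ)) * Gb := by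
    have h := master s hp0 hC0t hrdef (ball_subset_ball (by linarith)) hHalfz
    rw [add_zero, ← hV, ← hG, ← hGb] at h
    exact h
  -- base link
  have hQb : ENNReal.ofReal (|med volume γ u (ball x (r/4)) - c₀| ^ p) ≤
      (2 * g₁ * θ * (1 + 2 * g₁ * θ)) * Gb := by
    calc ENNReal.ofReal (|med volume γ u (ball x (r/4)) - c₀| ^ p)
        ≤ 2 * (ENNReal.ofReal γ)⁻¹ * ((volume (ball x (r/4)))⁻¹ * Phi p u x (r/4) c₀) :=
          med_dist_int hp0 hp1 hγ0 hγ humeas x (by positivity) c₀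
      _ ≤ 2 * g₁ * (V⁻¹ * Phi p u x (r/2) c₀) := by
          rw [← hg1]
          exact mul_le_mul_right
            (mul_le_mul' (hVinv x (r/4) (by linarith))
              (Phi_mono (ball_subset_ball (by linarith)) _)) _
      _ ≤ 2 * g₁ * (V⁻¹ * ((W * (1 + 2 * g₁ * θ)) * Gb)) :=
          mul_le_mul_right (mul_le_mul_right hHalf _) _
      _ = (V⁻¹ * W) * (2 * g₁ * (1 + 2 * g₁ * θ) * Gb) := by ring
      _ = 2 * g₁ * θ * (1 + 2 * g₁ * θ) * Gb := by rw [hθeq]; ring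
  -- the chain estimate
  have hQc : ∀ ζ : EuclideanSpace ℝ (Fin n), dist ζ x ≤ 15/16 * r →
      ENNReal.ofReal (|c₀ - med volume γ u (ball ζ (r/4))| ^ p) ≤
        (2 * g₁ * θ * (1 + 2 * g₁ * θ) + 32 * g₁ * θ) * Gb := by
    intro ζ hζ
    have hD0 : (0:ℝ) ≤ dist ζ x := dist_nonneg
    have hLink : ∀ t : ℕ, t < 8 →
        ENNReal.ofReal (|med volume γ u (ball (x + ((t:ℝ)/8) • (ζ - x)) (r/4)) -
          med volume γ u (ball (x + (((t:ℝ)+1)/8) • (ζ - x)) (r/4))| ^ p) ≤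
          (2 * (2 * g₁ * θ)) * Gb := by
      intro t ht
      have htle : (t:ℝ) ≤ 7 := by exact_mod_cast Nat.lt_succ_iff.mp ht
      have ht0 : (0:ℝ) ≤ (t:ℝ) := Nat.cast_nonneg t
      have hzb : ∀ z ∈ ball (x + ((t:ℝ)/16) • (ζ - x)) (r/16),
          ENNReal.ofReal (|med volume γ u (ball (x + ((t:ℝ)/8) • (ζ - x)) (r/4)) -
            med volume γ u (ball (x + (((t:ℝ)+1)/8) • (ζ - x)) (r/4))| ^ p) ≤
          (2 * (2 * g₁ * θ)) * Jfun p γ r u z + 0 := by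
        intro z hz
        have hzq : dist (x + ((t:ℝ)/16) • (ζ - x)) z < r/16 := by
          rw [dist_comm]; exact mem_ball.mp hz
        have hd1 : dist (x + ((t:ℝ)/8) • (ζ - x)) (x + ((t:ℝ)/16) • (ζ - x)) ≤
            (7/16) * (15/16 * r) := by
          rw [dist_seg]
          have h2 : |(t:ℝ)/8 - (t:ℝ)/16| = (t:ℝ)/16 := by
            rw [show (t:ℝ)/8 - (t:ℝ)/16 = (t:ℝ)/16 by ring, abs_of_nonneg (by positivity)]
          rw [h2]
          nlinarith
        have hd2 : dist (x + (((t:ℝ)+1)/8) • (ζ - x)) (x + ((t:ℝ)/16) • (ζ - x)) ≤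
            (9/16) * (15/16 * r) := by
          rw [dist_seg]
          have h2 : |((t:ℝ)+1)/8 - (t:ℝ)/16| = ((t:ℝ)+2)/16 := by
            rw [show ((t:ℝ)+1)/8 - (t:ℝ)/16 = ((t:ℝ)+2)/16 by ring,
              abs_of_nonneg (by positivity)]
          rw [h2]
          nlinarith
        have hsub1 : ball (x + ((t:ℝ)/8) • (ζ - x)) (r/4) ⊆ ball z r := by
          apply ball_subset_ball'
          have := dist_triangle (x + ((t:ℝ)/8) • (ζ - x)) (x + ((t:ℝ)/16) • (ζ - x)) z
          linarith
        have hsub2 : ball (x + (((t:ℝ)+1)/8) • (ζ - x)) (r/4) ⊆ ball z r := by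
          apply ball_subset_ball'
          have := dist_triangle (x + (((t:ℝ)+1)/8) • (ζ - x)) (x + ((t:ℝ)/16) • (ζ - x)) z
          linarith
        calc ENNReal.ofReal (|med volume γ u (ball (x + ((t:ℝ)/8) • (ζ - x)) (r/4)) -
              med volume γ u (ball (x + (((t:ℝ)+1)/8) • (ζ - x)) (r/4))| ^ p)
            ≤ ENNReal.ofReal (|med volume γ u (ball (x + ((t:ℝ)/8) • (ζ - x)) (r/4)) -
                med volume γ u (ball z r)| ^ p) +
              ENNReal.ofReal (|med volume γ u (ball z r) -
                med volume γ u (ball (x + (((t:ℝ)+1)/8) • (ζ - x)) (r/4))| ^ p) :=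
              abs_rpow_tri hp0 hp1 _ _ _
          _ ≤ 2 * g₁ * θ * Jfun p γ r u z + 2 * g₁ * θ * Jfun p γ r u z := by
              refine add_le_add (hKey _ z (r/4) (by linarith) hsub1) ?_
              rw [abs_sub_comm]
              exact hKey _ z (r/4) (by linarith) hsub2
          _ = (2 * (2 * g₁ * θ)) * Jfun p γ r u z + 0 := by ring
      have hsubr : ball (x + ((t:ℝ)/16) • (ζ - x)) (r/16) ⊆ ball x r := by
        apply ball_subset_ball'
        have hb : dist (x + ((t:ℝ)/16) • (ζ - x)) x ≤ (7/16) * (15/16 * r) := by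
          rw [dist_seg_base, abs_of_nonneg (by positivity)]
          nlinarith
        linarith
      have hC1t : (2 * (2 * g₁ * θ)) ≠ ⊤ := by
        exact ENNReal.mul_ne_top (by norm_num)
          (ENNReal.mul_ne_top (ENNReal.mul_ne_top (by norm_num) hg1t) hθt)
      have h := master s hp0 hC1t hrdef hsubr hzb
      rw [add_zero, ← hV, ← hG, ← hGb] at h
      exact h
    -- telescope over the chain
    have htel := tel_rpow hp0 hp1
      (fun t : ℕ => med volume γ u (ball (x + ((t:ℝ)/8) • (ζ - x)) (r/4))) 8
    push_cast at htel
    have hF0 : x + ((0:ℝ)/8) • (ζ - x) = x := by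
      rw [zero_div, zero_smul, add_zero]
    have hF8 : x + ((8:ℝ)/8) • (ζ - x) = ζ := by
      rw [show (8:ℝ)/8 = 1 by norm_num, one_smul]
      abel
    rw [hF0, hF8] at htel
    have hsum : ∑ t ∈ Finset.range 8,
        ENNReal.ofReal (|med volume γ u (ball (x + ((t:ℝ)/8) • (ζ - x)) (r/4)) -
          med volume γ u (ball (x + (((t:ℝ)+1)/8) • (ζ - x)) (r/4))| ^ p) ≤
        32 * g₁ * θ * Gb := by
      calc ∑ t ∈ Finset.range 8,
          ENNReal.ofReal (|med volume γ u (ball (x + ((t:ℝ)/8) • (ζ - x)) (r/4)) -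
            med volume γ u (ball (x + (((t:ℝ)+1)/8) • (ζ - x)) (r/4))| ^ p)
          ≤ ∑ _t ∈ Finset.range 8, (2 * (2 * g₁ * θ)) * Gb :=
            Finset.sum_le_sum (fun t ht => hLink t (Finset.mem_range.mp ht))
        _ = 8 * ((2 * (2 * g₁ * θ)) * Gb) := by
            rw [Finset.sum_const, Finset.card_range, nsmul_eq_mul]
            norm_num
        _ = 32 * g₁ * θ * Gb := by ring
    calc ENNReal.ofReal (|c₀ - med volume γ u (ball ζ (r/4))| ^ p)
        ≤ ENNReal.ofReal (|c₀ - med volume γ u (ball x (r/4))| ^ p) +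
          ENNReal.ofReal (|med volume γ u (ball x (r/4)) -
            med volume γ u (ball ζ (r/4))| ^ p) := abs_rpow_tri hp0 hp1 _ _ _
      _ ≤ (2 * g₁ * θ * (1 + 2 * g₁ * θ)) * Gb + 32 * g₁ * θ * Gb := by
          refine add_le_add ?_ ?_
          · rw [abs_sub_comm]; exact hQb
          · exact le_trans htel hsum
      _ = (2 * g₁ * θ * (1 + 2 * g₁ * θ) + 32 * g₁ * θ) * Gb := by ring
  -- covering of ball x r by scaled balls
  have hCovSub : ball x r ⊆ ⋃ y ∈ T, ball (x + r • y) (r/4) := by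
    intro a ha
    have han : ‖a - x‖ < r := by rw [← dist_eq_norm]; exact mem_ball.mp ha
    have h1 : r⁻¹ • (a - x) ∈ closedBall (0 : EuclideanSpace ℝ (Fin n)) 1 := by
      rw [mem_closedBall_zero_iff, norm_smul, Real.norm_eq_abs, abs_of_pos (inv_pos.mpr hr)]
      calc r⁻¹ * ‖a - x‖ ≤ r⁻¹ * r :=
            mul_le_mul_of_nonneg_left han.le (inv_pos.mpr hr).le
        _ = 1 := inv_mul_cancel₀ hr.ne'
    obtain ⟨y, hyT, hy⟩ := mem_iUnion₂.mp (hTcov h1)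
    refine mem_iUnion₂.mpr ⟨y, hyT, ?_⟩
    rw [mem_ball]
    have h2 : a = x + r • (r⁻¹ • (a - x)) := by
      rw [smul_smul, mul_inv_cancel₀ hr.ne', one_smul]; abel
    calc dist a (x + r • y) = ‖r • (r⁻¹ • (a - x)) - r • y‖ := by
          rw [dist_eq_norm]; congr 1
          nth_rewrite 1 [h2]; abel
      _ = r * dist (r⁻¹ • (a - x)) y := by
          rw [← smul_sub, norm_smul, Real.norm_eq_abs, abs_of_pos hr, dist_eq_norm]
      _ < r * 4⁻¹ := by
          exact (mul_lt_mul_iff_right₀ hr).mpr (mem_ball.mp hy)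
      _ = r/4 := by ring
  -- per cover ball estimate
  have hPiece : ∀ y ∈ T, Phi p u (x + r • y) (r/4) c₀ ≤
      W * ((1 + 2 * g₁ * θ) * Gb +
        (2 * g₁ * θ * (1 + 2 * g₁ * θ) + 32 * g₁ * θ) * Gb) := by
    intro y hyT
    have hny : ‖y‖ < 3/2 := hT y hyT
    have hy'ex : ∃ y' : EuclideanSpace ℝ (Fin n), ‖y'‖ ≤ 15/16 ∧ ‖y' - y‖ ≤ 9/16 := by
      by_cases h : ‖y‖ ≤ 15/16
      · exact ⟨y, h, by rw [sub_self, norm_zero]; norm_num⟩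
      · push_neg at h
        have hy0 : (0:ℝ) < ‖y‖ := lt_trans (by norm_num) h
        refine ⟨((15/16)/‖y‖) • y, ?_, ?_⟩
        · rw [norm_smul, Real.norm_eq_abs, abs_of_pos (by positivity),
            div_mul_cancel₀ _ hy0.ne']
        · have he : ((15/16)/‖y‖) • y - y = (((15/16)/‖y‖) - 1) • y := by
            rw [sub_smul, one_smul]
          rw [he, norm_smul, Real.norm_eq_abs]
          have h1 : (15/16)/‖y‖ - 1 < 0 := by
            rw [sub_neg, div_lt_one hy0]; linarith
          rw [abs_of_neg h1, neg_sub]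
          have h2 : (1 - 15/16/‖y‖) * ‖y‖ = ‖y‖ - 15/16 := by field_simp
          rw [h2]; linarith
    obtain ⟨y', hy'n, hy'd⟩ := hy'ex
    have hζx : dist (x + r • y') x ≤ 15/16 * r := by
      rw [dist_eq_norm, show x + r • y' - x = r • y' from by abel, norm_smul,
        Real.norm_eq_abs, abs_of_pos hr]
      nlinarith
    have hζw : dist (x + r • y') (x + r • y) ≤ 9/16 * r := by
      rw [dist_eq_norm, show x + r • y' - (x + r • y) = r • (y' - y) from by
        rw [smul_sub]; abel, norm_smul, Real.norm_eq_abs, abs_of_pos hr]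
      nlinarith
    have hregion : ball (x + r • y') (r/16) ⊆ ball x r := ball_subset_ball' (by linarith)
    have hzb : ∀ z ∈ ball (x + r • y') (r/16), Phi p u (x + r • y) (r/4) c₀ ≤
        (W * (1 + 2 * g₁ * θ)) * Jfun p γ r u z +
          W * ((2 * g₁ * θ * (1 + 2 * g₁ * θ) + 32 * g₁ * θ) * Gb) := by
      intro z hz
      have hzζ : dist (x + r • y') z < r/16 := by rw [dist_comm]; exact mem_ball.mp hz
      have hsubw : ball (x + r • y) (r/4) ⊆ ball z r := by
        apply ball_subset_ball'
        have h1 := dist_triangle (x + r • y) (x + r • y') z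
        have h2 : dist (x + r • y) (x + r • y') = dist (x + r • y') (x + r • y) :=
          dist_comm _ _
        linarith
      have hsubζ : ball (x + r • y') (r/4) ⊆ ball z r := ball_subset_ball' (by linarith)
      calc Phi p u (x + r • y) (r/4) c₀
          ≤ Phi p u (x + r • y) (r/4) (med volume γ u (ball z r)) +
              volume (ball (x + r • y) (r/4)) *
                ENNReal.ofReal (|med volume γ u (ball z r) - c₀| ^ p) :=
            Phi_shift hp0 hp1 _ _ _ _
        _ ≤ Phi p u z r (med volume γ u (ball z r)) +
              W * (ENNReal.ofReal (|med volume γ u (ball z r) -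
                  med volume γ u (ball (x + r • y') (r/4))| ^ p) +
                ENNReal.ofReal (|med volume γ u (ball (x + r • y') (r/4)) - c₀| ^ p)) := by
            refine add_le_add (Phi_mono hsubw _)
              (mul_le_mul' ?_ (abs_rpow_tri hp0 hp1 _ _ _))
            calc volume (ball (x + r • y) (r/4)) = volume (ball x (r/4)) :=
                  vol_ball_congr _ x (r/4)
              _ ≤ W := by rw [hW]; exact measure_mono (ball_subset_ball (by linarith))
        _ ≤ W * Jfun p γ r u z +
              W * (2 * g₁ * θ * Jfun p γ r u z +
                (2 * g₁ * θ * (1 + 2 * g₁ * θ) + 32 * g₁ * θ) * Gb) := by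
            refine add_le_add (le_of_eq (hΦJ z)) (mul_le_mul_right (add_le_add ?_ ?_) _)
            · rw [abs_sub_comm]
              exact hKey _ z (r/4) (by linarith) hsubζ
            · rw [abs_sub_comm, hc₀]
              exact hQc _ hζx
        _ = (W * (1 + 2 * g₁ * θ)) * Jfun p γ r u z +
              W * ((2 * g₁ * θ * (1 + 2 * g₁ * θ) + 32 * g₁ * θ) * Gb) := by ring
    have h := master s hp0 hC0t hrdef hregion hzb
    rw [← hV, ← hG, ← hGb] at h
    calc Phi p u (x + r • y) (r/4) c₀
        ≤ (W * (1 + 2 * g₁ * θ)) * Gb +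
            W * ((2 * g₁ * θ * (1 + 2 * g₁ * θ) + 32 * g₁ * θ) * Gb) := h
      _ = W * ((1 + 2 * g₁ * θ) * Gb +
            (2 * g₁ * θ * (1 + 2 * g₁ * θ) + 32 * g₁ * θ) * Gb) := by ring
  -- sum over the cover
  have hCov : Phi p u x r c₀ ≤ (T.card : ℝ≥0∞) *
      (W * ((1 + 2 * g₁ * θ) * Gb +
        (2 * g₁ * θ * (1 + 2 * g₁ * θ) + 32 * g₁ * θ) * Gb)) := by
    calc Phi p u x r c₀
        ≤ ∫⁻ z in ⋃ y ∈ T, ball (x + r • y) (r/4), ENNReal.ofReal (|u z - c₀| ^ p) :=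
          lintegral_mono' (Measure.restrict_mono hCovSub le_rfl) le_rfl
      _ ≤ ∑ y ∈ T, Phi p u (x + r • y) (r/4) c₀ :=
          lintegral_biUnion_finset_le volume _ T _
      _ ≤ ∑ _y ∈ T, (W * ((1 + 2 * g₁ * θ) * Gb +
            (2 * g₁ * θ * (1 + 2 * g₁ * θ) + 32 * g₁ * θ) * Gb)) :=
          Finset.sum_le_sum hPiece
      _ = (T.card : ℝ≥0∞) * (W * ((1 + 2 * g₁ * θ) * Gb +
            (2 * g₁ * θ * (1 + 2 * g₁ * θ) + 32 * g₁ * θ) * Gb)) := by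
          rw [Finset.sum_const, nsmul_eq_mul]
  -- final assembly
  have hFinal : ENNReal.ofReal (|c₀ - med volume γ u (ball x r)| ^ p) ≤
      (2 * g₁ * (T.card : ℝ≥0∞) *
        ((1 + 2 * g₁ * θ) + (2 * g₁ * θ * (1 + 2 * g₁ * θ) + 32 * g₁ * θ))) * Gb := by
    calc ENNReal.ofReal (|c₀ - med volume γ u (ball x r)| ^ p)
        = ENNReal.ofReal (|med volume γ u (ball x r) - c₀| ^ p) := by rw [abs_sub_comm]
      _ ≤ 2 * (ENNReal.ofReal γ)⁻¹ * ((volume (ball x r))⁻¹ * Phi p u x r c₀) :=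
          med_dist_int hp0 hp1 hγ0 hγ humeas x hr c₀
      _ ≤ 2 * g₁ * (W⁻¹ * ((T.card : ℝ≥0∞) * (W * ((1 + 2 * g₁ * θ) * Gb +
            (2 * g₁ * θ * (1 + 2 * g₁ * θ) + 32 * g₁ * θ) * Gb)))) := by
          rw [← hg1, ← hW]
          exact mul_le_mul_right (mul_le_mul_right hCov _) _
      _ = (W * W⁻¹) * (2 * g₁ * (T.card : ℝ≥0∞) * ((1 + 2 * g₁ * θ) * Gb +
            (2 * g₁ * θ * (1 + 2 * g₁ * θ) + 32 * g₁ * θ) * Gb)) := by ring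
      _ = (2 * g₁ * (T.card : ℝ≥0∞) *
            ((1 + 2 * g₁ * θ) + (2 * g₁ * θ * (1 + 2 * g₁ * θ) + 32 * g₁ * θ))) * Gb := by
          rw [ENNReal.mul_inv_cancel hW0 hWt, one_mul]; ring
  -- identify Gb
  have hne16 : ENNReal.ofReal ((r/16)^n) ≠ 0 := by
    simp only [ne_eq, ENNReal.ofReal_eq_zero, not_le]; positivity
  have hAj_eq : ENNReal.ofReal ((2:ℝ) ^ ((j:ℝ) * s)) ^ p
      = ENNReal.ofReal (((2:ℝ) ^ ((j:ℝ) * s)) ^ p) :=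
    ENNReal.ofReal_rpow_of_pos (Real.rpow_pos_of_pos two_pos _)
  have hreal : ((2:ℝ) ^ ((j:ℝ) * s)) ^ p * ((r/16)^n) =
      (((2:ℝ) ^ ((j:ℝ) * ((n:ℝ) - s * p))) * (16:ℝ)^n)⁻¹ := by
    have e1 : ((2:ℝ) ^ ((j:ℝ) * s)) ^ p = (2:ℝ) ^ ((j:ℝ) * s * p) :=
      (Real.rpow_mul (by norm_num) _ _).symm
    have e2 : (r/16 : ℝ)^n = (2:ℝ) ^ (-(j:ℝ) * (n:ℝ)) * ((16:ℝ)^n)⁻¹ := by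
      rw [hrdef, div_pow, ← Real.rpow_natCast ((2:ℝ) ^ (-(j:ℝ))) n,
        ← Real.rpow_mul (by norm_num : (0:ℝ) ≤ 2), div_eq_mul_inv]
    rw [e1, e2, mul_inv, ← Real.rpow_neg (by norm_num : (0:ℝ) ≤ 2), ← mul_assoc,
      ← Real.rpow_add two_pos]
    congr 2
    ring
  have hVeq : V = ENNReal.ofReal ((r/16)^n) * v := by
    rw [hV, Measure.addHaar_ball volume x (by positivity : (0:ℝ) ≤ r/16),
      finrank_euclideanSpace_fin, ← hv]
  have hGbeq : Gb = ENNReal.ofReal ((2:ℝ) ^ ((j:ℝ) * ((n:ℝ) - s * p))) * θ * v⁻¹ * G := by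
    rw [hGb, hVeq, ENNReal.mul_inv (Or.inl hne16) (Or.inl ENNReal.ofReal_ne_top)]
    have h1 : (ENNReal.ofReal ((2:ℝ) ^ ((j:ℝ) * s)) ^ p)⁻¹ *
        (ENNReal.ofReal ((r/16)^n))⁻¹ =
        ENNReal.ofReal ((2:ℝ) ^ ((j:ℝ) * ((n:ℝ) - s * p))) * θ := by
      rw [hAj_eq, ← ENNReal.mul_inv
          (Or.inl (by simp only [ne_eq, ENNReal.ofReal_eq_zero, not_le]; positivity))
          (Or.inl ENNReal.ofReal_ne_top),
        ← ENNReal.ofReal_mul (by positivity), hreal,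
        ← ENNReal.ofReal_inv_of_pos (by positivity), inv_inv,
        ENNReal.ofReal_mul (by positivity), hθ]
    calc (ENNReal.ofReal ((2:ℝ) ^ ((j:ℝ) * s)) ^ p)⁻¹ *
          ((ENNReal.ofReal ((r/16)^n))⁻¹ * v⁻¹ * G)
        = ((ENNReal.ofReal ((2:ℝ) ^ ((j:ℝ) * s)) ^ p)⁻¹ *
            (ENNReal.ofReal ((r/16)^n))⁻¹) * v⁻¹ * G := by ring
      _ = ENNReal.ofReal ((2:ℝ) ^ ((j:ℝ) * ((n:ℝ) - s * p))) * θ * v⁻¹ * G := by rw [h1]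
  have hKeq : stepK n γ T.card =
      2 * g₁ * (T.card : ℝ≥0∞) *
        ((1 + 2 * g₁ * θ) + (2 * g₁ * θ * (1 + 2 * g₁ * θ) + 32 * g₁ * θ)) * θ * v⁻¹ := by
    unfold stepK
    rw [← hg1, ← hθ, ← hv]
  calc ENNReal.ofReal (|c₀ - med volume γ u (ball x r)| ^ p)
      ≤ (2 * g₁ * (T.card : ℝ≥0∞) *
          ((1 + 2 * g₁ * θ) + (2 * g₁ * θ * (1 + 2 * g₁ * θ) + 32 * g₁ * θ))) * Gb := hFinal
    _ = stepK n γ T.card * ENNReal.ofReal ((2:ℝ) ^ ((j:ℝ) * ((n:ℝ) - s * p))) * G := by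
        rw [hGbeq, hKeq]; ring

lemma stepK_ne_top {n : ℕ} {γ : ℝ} (hγ0 : 0 < γ) (N : ℕ) : stepK n γ N ≠ ⊤ := by
  have hγne : ENNReal.ofReal γ ≠ 0 := by
    simp only [ne_eq, ENNReal.ofReal_eq_zero, not_le]; linarith
  have hg1t : (ENNReal.ofReal γ)⁻¹ ≠ ⊤ := ENNReal.inv_ne_top.mpr hγne
  have hv0 : volume (ball (0 : EuclideanSpace ℝ (Fin n)) 1) ≠ 0 :=
    (measure_ball_pos volume _ one_pos).ne'
  have hvinvt : (volume (ball (0 : EuclideanSpace ℝ (Fin n)) 1))⁻¹ ≠ ⊤ :=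
    ENNReal.inv_ne_top.mpr hv0
  have hθt : ENNReal.ofReal ((16:ℝ)^n) ≠ ⊤ := ENNReal.ofReal_ne_top
  have h2 : (2:ℝ≥0∞) ≠ ⊤ := by norm_num
  have h32 : (32:ℝ≥0∞) ≠ ⊤ := by norm_num
  have haux : 2 * (ENNReal.ofReal γ)⁻¹ * ENNReal.ofReal ((16:ℝ)^n) ≠ ⊤ :=
    ENNReal.mul_ne_top (ENNReal.mul_ne_top h2 hg1t) hθt
  have hA : (1 : ℝ≥0∞) + 2 * (ENNReal.ofReal γ)⁻¹ * ENNReal.ofReal ((16:ℝ)^n) ≠ ⊤ :=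
    ENNReal.add_ne_top.mpr ⟨ENNReal.one_ne_top, haux⟩
  unfold stepK
  refine ENNReal.mul_ne_top (ENNReal.mul_ne_top (ENNReal.mul_ne_top
    (ENNReal.mul_ne_top (ENNReal.mul_ne_top h2 hg1t) (ENNReal.natCast_ne_top N)) ?_) hθt) hvinvt
  refine ENNReal.add_ne_top.mpr ⟨hA, ENNReal.add_ne_top.mpr ⟨?_, ?_⟩⟩
  · exact ENNReal.mul_ne_top haux hA
  · exact ENNReal.mul_ne_top (ENNReal.mul_ne_top h32 hg1t) hθt


/-- the chain estimate for medians,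
`|m_u^γ(B(x,2^{-l})) - m_u^γ(B(x,2^{-m}))| ≤ C ∑_{j=m}^{l-1} 2^{-j(s-n/p)} (∫_{B(x,2^{-j})} g^p)^{1/p}`. -/
theorem median_chain_estimate (n : ℕ) (s p γ : ℝ)
    (hs0 : 0 < s) (hs1 : s < 1) (hp0 : 0 < p) (hp1 : p < 1)
    (hγ0 : 0 < γ) (hγ : γ ≤ 1/2)
    (u : EuclideanSpace ℝ (Fin n) → ℝ) (humeas : Measurable u) (hu : MemWsp n s p u) :
    ∃ C : ℝ≥0∞, 0 < C ∧ C < ∞ ∧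
      ∀ (x : EuclideanSpace ℝ (Fin n)) (l m : ℕ), m < l →
        ENNReal.ofReal
            |med volume γ u (ball x ((2:ℝ) ^ (-(l : ℝ)))) -
              med volume γ u (ball x ((2:ℝ) ^ (-(m : ℝ))))| ≤
          C * ∑ j ∈ Finset.Ico m l,
            ENNReal.ofReal ((2:ℝ) ^ (-(j : ℝ) * (s - (n : ℝ) / p))) *
              (∫⁻ z in ball x ((2:ℝ) ^ (-(j : ℝ))), (gFun n s p γ u z) ^ p) ^ (1 / p) := by

  classical
  rcases Nat.eq_zero_or_pos n with hn | hn
  · subst hn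
    refine ⟨1, zero_lt_one, ENNReal.one_lt_top, ?_⟩
    intro x l m _
    have hball : ∀ ρ : ℝ, 0 < ρ →
        ball x ρ = (univ : Set (EuclideanSpace ℝ (Fin 0))) := by
      intro ρ hρ
      ext y
      simp only [mem_ball, mem_univ, iff_true]
      rw [Subsingleton.elim y x, dist_self]
      exact hρ
    rw [hball _ (Real.rpow_pos_of_pos two_pos _), hball _ (Real.rpow_pos_of_pos two_pos _),
      sub_self, abs_zero, ENNReal.ofReal_zero]
    exact zero_le
  · haveI : Nonempty (Fin n) := ⟨⟨0, hn⟩⟩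
    haveI hnt : Nontrivial (EuclideanSpace ℝ (Fin n)) := inferInstance
    obtain ⟨T, hT, hTcov⟩ := cover_unit_ball n
    set K := stepK n γ T.card + 1 with hK
    have hK1 : (1:ℝ≥0∞) ≤ K := le_add_self
    have hK0 : 0 < K := lt_of_lt_of_le zero_lt_one hK1
    have hKt : K ≠ ⊤ :=
      ENNReal.add_ne_top.mpr ⟨stepK_ne_top hγ0 T.card, ENNReal.one_ne_top⟩
    refine ⟨K ^ (1/p), ENNReal.rpow_pos hK0 hKt, ENNReal.rpow_lt_top_of_nonneg
      (by positivity) hKt, ?_⟩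
    intro x l m hml
    set f : ℕ → ℝ := fun k => med volume γ u (ball x ((2:ℝ) ^ (-(k:ℝ)))) with hf
    -- the per-scale step
    have hstep : ∀ j : ℕ, ENNReal.ofReal |f (j+1) - f j| ≤
        K ^ (1/p) * (ENNReal.ofReal ((2:ℝ) ^ (-(j:ℝ) * (s - (n:ℝ)/p))) *
          (∫⁻ z in ball x ((2:ℝ) ^ (-(j:ℝ))), gFun n s p γ u z ^ p) ^ (1/p)) := by
      intro j
      have h2 : (2:ℝ) ^ (-(((j:ℕ)+1:ℕ):ℝ)) = (2:ℝ) ^ (-(j:ℝ)) / 2 := by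
        push_cast
        rw [neg_add, Real.rpow_add two_pos, Real.rpow_neg_one, div_eq_mul_inv]
      have hse := step_estimate (s := s) hp0 hp1.le hγ0 hγ humeas T hT hTcov x j
      rw [← h2] at hse
      have h3 := ENNReal.rpow_le_rpow hse (by positivity : (0:ℝ) ≤ 1/p)
      rw [← ENNReal.ofReal_rpow_of_nonneg (abs_nonneg _) hp0.le, ← ENNReal.rpow_mul,
        mul_one_div, div_self hp0.ne', ENNReal.rpow_one,
        ENNReal.mul_rpow_of_nonneg _ _ (by positivity : (0:ℝ) ≤ 1/p),
        ENNReal.mul_rpow_of_nonneg _ _ (by positivity : (0:ℝ) ≤ 1/p)] at h3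
      have h4 : (ENNReal.ofReal ((2:ℝ) ^ ((j:ℝ) * ((n:ℝ) - s * p)))) ^ (1/p) =
          ENNReal.ofReal ((2:ℝ) ^ (-(j:ℝ) * (s - (n:ℝ)/p))) := by
        rw [ENNReal.ofReal_rpow_of_pos (Real.rpow_pos_of_pos two_pos _),
          ← Real.rpow_mul (by norm_num : (0:ℝ) ≤ 2)]
        congr 1
        field_simp
        ring
      calc ENNReal.ofReal |f (j+1) - f j|
          ≤ stepK n γ T.card ^ (1/p) *
              (ENNReal.ofReal ((2:ℝ) ^ ((j:ℝ) * ((n:ℝ) - s * p)))) ^ (1/p) *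
              (∫⁻ z in ball x ((2:ℝ) ^ (-(j:ℝ))), gFun n s p γ u z ^ p) ^ (1/p) := h3
        _ ≤ K ^ (1/p) *
              (ENNReal.ofReal ((2:ℝ) ^ ((j:ℝ) * ((n:ℝ) - s * p)))) ^ (1/p) *
              (∫⁻ z in ball x ((2:ℝ) ^ (-(j:ℝ))), gFun n s p γ u z ^ p) ^ (1/p) := by
            refine mul_le_mul_left (mul_le_mul_left ?_ _) _
            exact ENNReal.rpow_le_rpow (by rw [hK]; exact le_self_add) (by positivity)
        _ = K ^ (1/p) * (ENNReal.ofReal ((2:ℝ) ^ (-(j:ℝ) * (s - (n:ℝ)/p))) *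
              (∫⁻ z in ball x ((2:ℝ) ^ (-(j:ℝ))), gFun n s p γ u z ^ p) ^ (1/p)) := by
            rw [h4, mul_assoc]
    have htele : ∀ L : ℕ, m ≤ L → |f L - f m| ≤ ∑ j ∈ Finset.Ico m L, |f (j+1) - f j| := by
      intro L hL
      induction L, hL using Nat.le_induction with
      | base => simp
      | succ L hL ih =>
          rw [Finset.sum_Ico_succ_top hL]
          have h5 : |f (L+1) - f m| ≤ |f (L+1) - f L| + |f L - f m| := abs_sub_le _ _ _
          have h6 : |f (L+1) - f L| = |f L - f (L+1)| := abs_sub_comm _ _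
          linarith
    calc ENNReal.ofReal |f l - f m|
        ≤ ENNReal.ofReal (∑ j ∈ Finset.Ico m l, |f (j+1) - f j|) :=
          ENNReal.ofReal_le_ofReal (htele l hml.le)
      _ = ∑ j ∈ Finset.Ico m l, ENNReal.ofReal |f (j+1) - f j| :=
          ENNReal.ofReal_sum_of_nonneg (fun j _ => abs_nonneg _)
      _ ≤ ∑ j ∈ Finset.Ico m l, K ^ (1/p) *
            (ENNReal.ofReal ((2:ℝ) ^ (-(j:ℝ) * (s - (n:ℝ)/p))) *
              (∫⁻ z in ball x ((2:ℝ) ^ (-(j:ℝ))), gFun n s p γ u z ^ p) ^ (1/p)) :=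
          Finset.sum_le_sum (fun j _ => hstep j)
      _ = K ^ (1/p) * ∑ j ∈ Finset.Ico m l,
            ENNReal.ofReal ((2:ℝ) ^ (-(j:ℝ) * (s - (n:ℝ)/p))) *
              (∫⁻ z in ball x ((2:ℝ) ^ (-(j:ℝ))), gFun n s p γ u z ^ p) ^ (1/p) :=
          (Finset.mul_sum _ _ _).symm
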